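/- Let n ≥ 1 be real, μ1 ∈ ℝ, δ ≥ 0, and κ := (μ1−1−√δ)/2. Then for all real p, the algebraic identity 2p·γ_F(p, n+κ+√δ) − γ_S(p, n+μ1) = (p−1)·(2 − (n+√δ)p) holds. Consequently, for an integer n ≥ 1 and p > 1: 2p·γ_F(p, n+κ+√δ) > γ_S(p, n+μ1) if and only if n = 1, √δ < 1 and p < 2/(1+√δ). -/
import Mathlib


/-- `γ_F(p,ν) := 2 − ν(p−1)`. -/
def gammaF (p ν : ℝ) : ℝ := 2 - ν * (p - 1)

/-- `γ_S(p,ν) := 2 + (ν+1)p − (ν−1)p²`. -/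
def gammaS (p ν : ℝ) : ℝ := 2 + (ν + 1) * p - (ν - 1) * p ^ 2

/-- The identity `2p γ_F(p,n+κ+√δ) − γ_S(p,n+μ1) = (p−1)(2 − (n+√δ)p)` and its
consequence: for integer `n ≥ 1` and `p > 1`, the strict inequality holds
exactly when `n = 1`, `√δ < 1` and `p < 2/(1+√δ)`. -/
theorem two_p_gammaF_shift_vs_gammaS (μ1 δ : ℝ) (hδ : 0 ≤ δ) :
    (∀ n : ℝ, 1 ≤ n → ∀ p : ℝ,
      2 * p * gammaF p (n + (μ1 - 1 - Real.sqrt δ) / 2 + Real.sqrt δ) -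
          gammaS p (n + μ1) =
        (p - 1) * (2 - (n + Real.sqrt δ) * p)) ∧
    (∀ n : ℕ, 1 ≤ n → ∀ p : ℝ, 1 < p →
      (gammaS p ((n : ℝ) + μ1) <
          2 * p * gammaF p ((n : ℝ) + (μ1 - 1 - Real.sqrt δ) / 2 + Real.sqrt δ) ↔
        n = 1 ∧ Real.sqrt δ < 1 ∧ p < 2 / (1 + Real.sqrt δ))) := by
  have hs : (0:ℝ) ≤ Real.sqrt δ := Real.sqrt_nonneg δ
  have key : ∀ n p : ℝ,
      2 * p * gammaF p (n + (μ1 - 1 - Real.sqrt δ) / 2 + Real.sqrt δ) -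
          gammaS p (n + μ1) = (p - 1) * (2 - (n + Real.sqrt δ) * p) := by
    intro n p; simp only [gammaF, gammaS]; ring
  refine ⟨fun n _ p => key n p, fun n hn p hp => ?_⟩
  have h1 : (1:ℝ) ≤ (n:ℝ) := by exact_mod_cast hn
  have hkey := key n p
  constructor
  · intro h
    have hpos : 0 < (p - 1) * (2 - ((n:ℝ) + Real.sqrt δ) * p) := by linarith
    have h2 : 0 < 2 - ((n:ℝ) + Real.sqrt δ) * p := by
      by_contra hc; push_neg at hc; nlinarith
    have hn1 : n = 1 := by
      by_contra hne
      have : (2:ℝ) ≤ (n:ℝ) := by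
        have : 2 ≤ n := lt_of_le_of_ne hn (Ne.symm hne)
        exact_mod_cast this
      nlinarith
    subst hn1
    have hd : Real.sqrt δ < 1 := by push_cast at h2 ⊢; nlinarith
    refine ⟨rfl, hd, ?_⟩
    rw [lt_div_iff₀ (by linarith)]
    push_cast at h2; nlinarith
  · rintro ⟨hn1, hd, hlt⟩
    subst hn1
    have hlt' : (1 + Real.sqrt δ) * p < 2 := by
      rw [lt_div_iff₀ (by linarith)] at hlt; linarith
    push_cast at hkey ⊢
    nlinarith
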